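/- Suppose b and σ satisfy the Lipschitz assumption and x* is a periodic solution of the DDE with orbit 𝐎. Let μ > 0, let M_μ > 0 satisfy |b(φ)| + |σ(φ)|² ≤ M_μ for all φ in the closure of 𝐁(𝐎,2μ), let η ∈ (0,μ/4), and let 0 < S < μ/(4M_μ). Then every x ∈ C([-τ,S],ℝ^d) with x₀ ∈ 𝐒(𝐎,μ) and sup_{0≤s≤S} d₀(𝐎, x_s) ≥ 2μ − η satisfies I_S(x) ≥ μ²/(32 S M_μ). -/

import Mathlib

open MeasureTheory Set Metric
open scoped ENNReal

noncomputable section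

/-- `ℝ^d`. -/
abbrev Vec (d : ℕ) := EuclideanSpace ℝ (Fin d)

/-- The state space `𝐂 = C([-τ,0],ℝ^d)`. -/
abbrev Hist (τ : ℝ) (d : ℕ) := C(Icc (-τ) (0:ℝ), Vec d)

/-- The path space `C([-τ,T],ℝ^d)`. -/
abbrev Traj (τ T : ℝ) (d : ℕ) := C(Icc (-τ) T, Vec d)

/-- Matrix acting on a vector. -/
def matVec {d m : ℕ} (M : Matrix (Fin d) (Fin m) ℝ) (v : Vec m) : Vec d :=
  WithLp.toLp 2 (fun i => ∑ j, M i j * v j)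

/-- Squared Frobenius norm of a matrix. -/
def frobSq {d m : ℕ} (M : Matrix (Fin d) (Fin m) ℝ) : ℝ := ∑ i, ∑ j, (M i j) ^ 2

/-- Frobenius norm of a matrix. -/
def frobNorm {d m : ℕ} (M : Matrix (Fin d) (Fin m) ℝ) : ℝ := Real.sqrt (frobSq M)

/-- Evaluation of a path at a time `t ∈ [-τ,T]` (clamped). -/
def ev {d : ℕ} {τ T : ℝ} (h : -τ ≤ T) (x : Traj τ T d) (t : ℝ) : Vec d :=
  x (projIcc (-τ) T h t)

/-- The history segment `x_t ∈ 𝐂` of a path `x ∈ C([-τ,T],ℝ^d)`, for `t ∈ [0,T]`. -/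
def seg {d : ℕ} {τ T : ℝ} (h : -τ ≤ T) (x : Traj τ T d) (t : ℝ) : Hist τ d :=
  ⟨fun s => x (projIcc (-τ) T h (t + s.1)),
    x.continuous.comp <| continuous_projIcc.comp <| continuous_const.add continuous_subtype_val⟩

/-- The uniform Lipschitz assumption on the coefficients:
`|b(φ)−b(ψ)|² + |σ(φ)−σ(ψ)|² ≤ κ₁ ‖φ−ψ‖²`. -/
def LipCoeff {d m : ℕ} {τ : ℝ} (b : Hist τ d → Vec d)
    (σ' : Hist τ d → Matrix (Fin d) (Fin m) ℝ) (κ₁ : ℝ) : Prop :=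
  ∀ φ ψ : Hist τ d, ‖b φ - b ψ‖ ^ 2 + frobSq (σ' φ - σ' ψ) ≤ κ₁ * ‖φ - ψ‖ ^ 2

/-- The linear growth bound `|b(φ)|² + |σ(φ)|² ≤ κ₂ (1 + ‖φ‖²)`. -/
def GrowthCoeff {d m : ℕ} {τ : ℝ} (b : Hist τ d → Vec d)
    (σ' : Hist τ d → Matrix (Fin d) (Fin m) ℝ) (κ₂ : ℝ) : Prop :=
  ∀ φ : Hist τ d, ‖b φ‖ ^ 2 + frobSq (σ' φ) ≤ κ₂ * (1 + ‖φ‖ ^ 2)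

/-- The set `U_T(x)` of controls `u ∈ L²([0,T],ℝ^m)` satisfying
`x(t) = x(0) + ∫₀ᵗ b(x_s) ds + ∫₀ᵗ σ(x_s) u(s) ds` for `t ∈ [0,T]`. -/
def controls {d m : ℕ} {τ T : ℝ} (h : -τ ≤ T) (b : Hist τ d → Vec d)
    (σ' : Hist τ d → Matrix (Fin d) (Fin m) ℝ) (x : Traj τ T d) : Set (ℝ → Vec m) :=
  {u | MemLp u 2 (volume.restrict (Icc 0 T)) ∧
    ∀ t ∈ Icc (0:ℝ) T,
      ev h x t = ev h x 0 + (∫ s in (0:ℝ)..t, b (seg h x s)) +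
        ∫ s in (0:ℝ)..t, matVec (σ' (seg h x s)) (u s)}

/-- The rate function `I_T(x) = inf_{u ∈ U_T(x)} ½∫₀ᵀ |u(s)|² ds` (with value `∞` if
`U_T(x) = ∅`). -/
def rate {d m : ℕ} {τ T : ℝ} (h : -τ ≤ T) (b : Hist τ d → Vec d)
    (σ' : Hist τ d → Matrix (Fin d) (Fin m) ℝ) (x : Traj τ T d) : ℝ≥0∞ :=
  ⨅ (u : ℝ → Vec m) (_ : u ∈ controls h b σ' x),
    ENNReal.ofReal ((1/2) * ∫ s in (0:ℝ)..T, ‖u s‖ ^ 2)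

open Classical in
/-- The rate function `I_T^φ(x)`, which is `I_T(x)` if `x₀ = φ` and `∞` otherwise. -/
def rateAt {d m : ℕ} {τ T : ℝ} (h : -τ ≤ T) (b : Hist τ d → Vec d)
    (σ' : Hist τ d → Matrix (Fin d) (Fin m) ℝ) (φ : Hist τ d) (x : Traj τ T d) : ℝ≥0∞ :=
  if seg h x 0 = φ then rate h b σ' x else ⊤

/-- The history segment `x_t ∈ 𝐂` of a function `x ∈ C(ℝ,ℝ^d)` (used for functions on
`[-τ,∞)`, extended continuously to `ℝ`). -/
def segF {d : ℕ} (τ : ℝ) (x : C(ℝ, Vec d)) (t : ℝ) : Hist τ d :=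
  ⟨fun s => x (t + s.1), x.continuous.comp <| continuous_const.add continuous_subtype_val⟩

/-- `x` is a solution of the DDE `x(t) = x(0) + ∫₀ᵗ b(x_s) ds`, `t ≥ 0`. -/
def IsDDESol {d : ℕ} (τ : ℝ) (b : Hist τ d → Vec d) (x : C(ℝ, Vec d)) : Prop :=
  ∀ t : ℝ, 0 ≤ t → x t = x 0 + ∫ s in (0:ℝ)..t, b (segF τ x s)

/-- `x` is a periodic solution of the DDE with period `p`. -/
def IsPeriodicSol {d : ℕ} (τ : ℝ) (b : Hist τ d → Vec d) (x : C(ℝ, Vec d)) (p : ℝ) : Prop :=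
  IsDDESol τ b x ∧ 0 < p ∧ ∀ t : ℝ, -τ ≤ t → x (t + p) = x t

/-- The orbit `𝐎 = {x*_t : t ∈ [0,p)} ⊂ 𝐂` of a periodic solution. -/
def orbit {d : ℕ} (τ : ℝ) (x : C(ℝ, Vec d)) (p : ℝ) : Set (Hist τ d) :=
  (segF τ x) '' Ico 0 p

/-- Uniform ellipticity of `a = σσ'`: `ν' a(φ) ν ≥ c |ν|²`. -/
def UnifElliptic {d : ℕ} {τ : ℝ} (σ' : Hist τ d → Matrix (Fin d) (Fin d) ℝ) (c : ℝ) : Prop :=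
  ∀ (φ : Hist τ d) (ν : Fin d → ℝ),
    c * (∑ i, ν i ^ 2) ≤ dotProduct ν ((σ' φ * Matrix.transpose (σ' φ)).mulVec ν)

section AuxLemmas

lemma frobSq_nonneg' {d m : ℕ} (M : Matrix (Fin d) (Fin m) ℝ) : 0 ≤ frobSq M :=
  Finset.sum_nonneg fun _ _ => Finset.sum_nonneg fun _ _ => sq_nonneg _

lemma norm_sq_eucl {n : ℕ} (v : Vec n) : ‖v‖ ^ 2 = ∑ i, (v i) ^ 2 := by
  have h1 : ‖v‖ = Real.sqrt (∑ i, (v i) ^ 2) := by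
    rw [EuclideanSpace.norm_eq]
    congr 1
    exact Finset.sum_congr rfl fun i _ => by rw [Real.norm_eq_abs, sq_abs]
  rw [h1, Real.sq_sqrt (Finset.sum_nonneg fun _ _ => sq_nonneg _)]

lemma norm_matVec_le {d m : ℕ} (M : Matrix (Fin d) (Fin m) ℝ) (v : Vec m) :
    ‖matVec M v‖ ≤ frobNorm M * ‖v‖ := by
  have h1 : ‖matVec M v‖ ^ 2 ≤ frobSq M * ‖v‖ ^ 2 := by
    rw [norm_sq_eucl, norm_sq_eucl]
    calc ∑ i, (matVec M v i) ^ 2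
        ≤ ∑ i, (∑ j, (M i j) ^ 2) * ∑ j, (v j) ^ 2 :=
          Finset.sum_le_sum fun i _ => by
            show (∑ j, M i j * v j) ^ 2 ≤ _
            exact Finset.sum_mul_sq_le_sq_mul_sq _ _ _
      _ = frobSq M * ∑ j, (v j) ^ 2 := by rw [frobSq, Finset.sum_mul]
  calc ‖matVec M v‖ = Real.sqrt (‖matVec M v‖ ^ 2) := (Real.sqrt_sq (norm_nonneg _)).symm
    _ ≤ Real.sqrt (frobSq M * ‖v‖ ^ 2) := Real.sqrt_le_sqrt h1
    _ = frobNorm M * ‖v‖ := by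
        rw [Real.sqrt_mul (frobSq_nonneg' M), Real.sqrt_sq (norm_nonneg _)]; rfl

lemma b_continuous {d m : ℕ} {τ : ℝ} {b : Hist τ d → Vec d}
    {σ' : Hist τ d → Matrix (Fin d) (Fin m) ℝ} {κ₁ : ℝ} (hκ : 0 < κ₁)
    (hlip : LipCoeff b σ' κ₁) : Continuous b := by
  have key : ∀ φ ψ : Hist τ d, dist (b φ) (b ψ) ≤ Real.sqrt κ₁ * dist φ ψ := by
    intro φ ψ
    rw [dist_eq_norm, dist_eq_norm]
    have h2 : ‖b φ - b ψ‖ ^ 2 ≤ κ₁ * ‖φ - ψ‖ ^ 2 :=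
      le_trans (le_add_of_nonneg_right (frobSq_nonneg' _)) (hlip φ ψ)
    nlinarith [norm_nonneg (b φ - b ψ), norm_nonneg (φ - ψ), Real.sq_sqrt hκ.le,
      Real.sqrt_nonneg κ₁, mul_nonneg (Real.sqrt_nonneg κ₁) (norm_nonneg (φ - ψ))]
  exact (LipschitzWith.of_dist_le_mul
    (K := ⟨Real.sqrt κ₁, Real.sqrt_nonneg _⟩) key).continuous

lemma seg_continuous {d : ℕ} {τ T : ℝ} (h : -τ ≤ T) (x : Traj τ T d) :
    Continuous (seg h x) := by
  let F : C(ℝ × Icc (-τ) (0:ℝ), Vec d) :=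
    ⟨fun q => x (projIcc (-τ) T h (q.1 + q.2.1)),
      x.continuous.comp <| continuous_projIcc.comp <|
        continuous_fst.add (continuous_subtype_val.comp continuous_snd)⟩
  have hEq : seg h x = fun t => F.curry t := by
    funext t; ext v; rfl
  rw [hEq]
  exact F.curry.continuous

lemma segF_continuous {d : ℕ} (τ : ℝ) (xs : C(ℝ, Vec d)) :
    Continuous (segF τ xs) := by
  let F : C(ℝ × Icc (-τ) (0:ℝ), Vec d) :=
    ⟨fun q => xs (q.1 + q.2.1),
      xs.continuous.comp <| continuous_fst.add (continuous_subtype_val.comp continuous_snd)⟩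
  have hEq : segF τ xs = fun t => F.curry t := by
    funext t; ext v; rfl
  rw [hEq]
  exact F.curry.continuous

lemma segF_mem_orbit {d : ℕ} {τ : ℝ} {b : Hist τ d → Vec d} {xs : C(ℝ, Vec d)} {p : ℝ}
    (hxs : IsPeriodicSol τ b xs p) {r : ℝ} (hr : 0 ≤ r) :
    segF τ xs r ∈ orbit τ xs p := by
  obtain ⟨_, hp, hper⟩ := hxs
  have hnat : ∀ (n : ℕ) (t : ℝ), -τ ≤ t → xs (t + n * p) = xs t := by
    intro n
    induction n with
    | zero => intro t _; simp
    | succ k ih =>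
      intro t ht
      have hk : (0:ℝ) ≤ k * p := by positivity
      have h1 : xs (t + k * p + p) = xs (t + k * p) :=
        hper _ (le_trans ht (le_add_of_nonneg_right hk))
      have h2 : t + ((k:ℕ)+1 : ℕ) * p = t + k * p + p := by push_cast; ring
      rw [h2, h1]
      exact ih t ht
  have hfl : (0:ℤ) ≤ ⌊r / p⌋ := Int.floor_nonneg.2 (div_nonneg hr hp.le)
  set n : ℕ := ⌊r / p⌋.toNat with hn
  have hcast : (n : ℝ) = ((⌊r / p⌋ : ℤ) : ℝ) := by
    rw [hn]; exact_mod_cast congrArg (fun z : ℤ => (z : ℝ)) (Int.toNat_of_nonneg hfl)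
  set q : ℝ := r - ⌊r / p⌋ * p with hq
  have hq0 : 0 ≤ q := Int.sub_floor_div_mul_nonneg r hp
  have hqp : q < p := Int.sub_floor_div_mul_lt r hp
  refine ⟨q, ⟨hq0, hqp⟩, ?_⟩
  refine ContinuousMap.ext fun v => ?_
  show xs (q + v.1) = xs (r + v.1)
  have hv : -τ ≤ v.1 := v.2.1
  have hrw : r + v.1 = (q + v.1) + n * p := by rw [hcast, hq]; ring
  rw [hrw, hnat n (q + v.1) (le_trans hv (le_add_of_nonneg_left hq0))]

end AuxLemmas

set_option maxHeartbeats 2000000 in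
/-- key estimate of Lemma 6.6: a path starting on `𝐒(𝐎,μ)` that reaches
distance `2μ − η` from the orbit within a short time `S` has energy at least
`μ²/(32 S M_μ)`. -/
theorem stmt_15 {d m : ℕ} (hd : 0 < d) (hm : 0 < m) {τ : ℝ} (hτ : 0 < τ)
    (b : Hist τ d → Vec d) (σ' : Hist τ d → Matrix (Fin d) (Fin m) ℝ)
    {κ₁ : ℝ} (hκ₁ : 0 < κ₁) (hlip : LipCoeff b σ' κ₁)
    (xs : C(ℝ, Vec d)) (p : ℝ) (hxs : IsPeriodicSol τ b xs p)
    (μ : ℝ) (hμ : 0 < μ)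
    (Mμ : ℝ) (hMμ : 0 < Mμ)
    -- `|b(φ)| + |σ(φ)|² ≤ M_μ` on the closure of `𝐁(𝐎,2μ)`
    (hbd : ∀ φ : Hist τ d, infDist φ (orbit τ xs p) ≤ 2 * μ → ‖b φ‖ + frobSq (σ' φ) ≤ Mμ)
    (η : ℝ) (hη : 0 < η) (hημ : η < μ / 4)
    (S : ℝ) (hS : 0 < S) (hSμ : S < μ / (4 * Mμ)) (h : -τ ≤ S)
    (x : Traj τ S d)
    (hx0 : infDist (seg h x 0) (orbit τ xs p) = μ)
    (hsup : 2 * μ - η ≤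
      sSup ((fun s => infDist (seg h x s) (orbit τ xs p)) '' Icc (0:ℝ) S)) :
    ENNReal.ofReal (μ ^ 2 / (32 * S * Mμ)) ≤ rate h b σ' x := by
  classical
  -- basic facts
  have hb_cont : Continuous b := b_continuous hκ₁ hlip
  have hsegx : Continuous (seg h x) := seg_continuous h x
  have hsegF : Continuous (segF τ xs (d := d)) := segF_continuous τ xs
  have hOne : (orbit τ xs p).Nonempty := ⟨segF τ xs 0, 0, ⟨le_refl 0, hxs.2.1⟩, rfl⟩
  set O := orbit τ xs p with hO
  set f : ℝ → ℝ := fun s => infDist (seg h x s) O with hfdef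
  have hf_cont : Continuous f := (continuous_infDist_pt O).comp hsegx
  have hf0 : f 0 = μ := hx0
  have hSMμ : S * Mμ ≤ μ / 4 := by
    have h4 : S * (4 * Mμ) < μ := (lt_div_iff₀ (by positivity)).1 hSμ
    nlinarith
  -- bound on b and σ along the orbit
  have hxsorb : ∀ r : ℝ, 0 ≤ r → segF τ xs r ∈ O := fun r hr => segF_mem_orbit hxs hr
  have hbound_orbit : ∀ r : ℝ, 0 ≤ r → ‖b (segF τ xs r)‖ ≤ Mμ := by
    intro r hr
    have h0 : infDist (segF τ xs r) O = 0 := infDist_zero_of_mem (hxsorb r hr)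
    have h1 := hbd (segF τ xs r) (by rw [h0]; positivity)
    nlinarith [frobSq_nonneg' (σ' (segF τ xs r))]
  -- movement bound for the periodic solution
  have hxs_move : ∀ t₀ w : ℝ, 0 ≤ t₀ → 0 ≤ w → ‖xs (t₀ + w) - xs t₀‖ ≤ w * Mμ := by
    intro t₀ w ht₀ hw
    have hcont : Continuous fun r => b (segF τ xs r) := hb_cont.comp hsegF
    have hint1 : IntervalIntegrable (fun r => b (segF τ xs r)) volume 0 (t₀ + w) :=
      hcont.intervalIntegrable _ _
    have hint2 : IntervalIntegrable (fun r => b (segF τ xs r)) volume 0 t₀ :=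
      hcont.intervalIntegrable _ _
    have heq : xs (t₀ + w) - xs t₀ = ∫ s in t₀..(t₀ + w), b (segF τ xs s) := by
      rw [hxs.1 (t₀ + w) (by linarith), hxs.1 t₀ ht₀,
        ← intervalIntegral.integral_interval_sub_left hint1 hint2]
      abel
    rw [heq]
    have hb : ∀ s ∈ uIoc t₀ (t₀ + w), ‖b (segF τ xs s)‖ ≤ Mμ := by
      intro s hs
      rw [uIoc_of_le (by linarith)] at hs
      exact hbound_orbit s (le_trans ht₀ hs.1.le)
    calc ‖∫ s in t₀..(t₀ + w), b (segF τ xs s)‖ ≤ Mμ * |t₀ + w - t₀| :=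
          intervalIntegral.norm_integral_le_of_norm_le_const hb
      _ = w * Mμ := by rw [add_sub_cancel_left, abs_of_nonneg hw]; ring
  -- the supremum is attained
  have himg : IsCompact (f '' Icc 0 S) := isCompact_Icc.image hf_cont
  have hne : (f '' Icc 0 S).Nonempty := (nonempty_Icc.2 hS.le).image f
  obtain ⟨s₁, hs₁mem, hfs₁⟩ := himg.sSup_mem hne
  have hfs₁' : 2 * μ - η ≤ f s₁ := by rw [hfs₁]; exact hsup
  -- first hitting time
  set A : Set ℝ := Icc (0:ℝ) s₁ ∩ {s | 2 * μ - η ≤ f s} with hA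
  have hAcomp : IsCompact A :=
    isCompact_Icc.inter_right (isClosed_le continuous_const hf_cont)
  have hAne : A.Nonempty := ⟨s₁, ⟨⟨hs₁mem.1, le_refl _⟩, hfs₁'⟩⟩
  set sc : ℝ := sInf A with hsc
  have hscA : sc ∈ A := hAcomp.sInf_mem hAne
  have hsc0 : 0 ≤ sc := hscA.1.1
  have hscS : sc ≤ S := le_trans hscA.1.2 hs₁mem.2
  have hfsc_ge : 2 * μ - η ≤ f sc := hscA.2
  have hscpos : 0 < sc := by
    rcases hsc0.lt_or_eq with h' | h'
    · exact h'
    · exfalso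
      have h2 := hfsc_ge
      rw [← h', hf0] at h2
      linarith
  have hflt : ∀ s, 0 ≤ s → s < sc → f s < 2 * μ - η := by
    intro s hs0 hs
    by_contra hcon
    push_neg at hcon
    have hmem : s ∈ A := ⟨⟨hs0, le_trans hs.le hscA.1.2⟩, hcon⟩
    exact absurd (csInf_le hAcomp.bddBelow hmem) (not_le.2 hs)
  have hfsc_le : f sc ≤ 2 * μ - η := by
    have htd : Filter.Tendsto f (nhdsWithin sc (Iio sc)) (nhds (f sc)) :=
      hf_cont.continuousAt.tendsto.mono_left nhdsWithin_le_nhds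
    have hev : ∀ᶠ s in nhdsWithin sc (Iio sc), f s ≤ 2 * μ - η := by
      filter_upwards [Ioo_mem_nhdsLT hscpos] with s hs
      exact (hflt s hs.1.le hs.2).le
    exact le_of_tendsto htd hev
  have hf_le2μ : ∀ s ∈ Icc (0:ℝ) sc, f s ≤ 2 * μ - η := by
    intro s hs
    rcases hs.2.lt_or_eq with h' | h'
    · exact (hflt s hs.1 h').le
    · rw [h']; exact hfsc_le
  -- bound on b and σ along x up to time sc
  have hb_x : ∀ s ∈ Icc (0:ℝ) sc, ‖b (seg h x s)‖ ≤ Mμ ∧ frobSq (σ' (seg h x s)) ≤ Mμ := by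
    intro s hs
    have h2 : infDist (seg h x s) O ≤ 2 * μ := le_trans (hf_le2μ s hs) (by linarith)
    have h3 := hbd (seg h x s) h2
    constructor
    · nlinarith [frobSq_nonneg' (σ' (seg h x s))]
    · nlinarith [norm_nonneg (b (seg h x s))]
  -- the maximal displacement of x on [0, sc]
  set g : ℝ → ℝ := fun t => ‖ev h x t - ev h x 0‖ with hgdef
  have hg_cont : Continuous g := by
    have hev : Continuous (ev h x) := x.continuous.comp continuous_projIcc
    exact (hev.sub continuous_const).norm
  obtain ⟨ts, htsmem, htsmax⟩ :=
    isCompact_Icc.exists_isMaxOn (nonempty_Icc.2 hsc0) hg_cont.continuousOn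
  have htsS : ts ≤ S := le_trans htsmem.2 hscS
  have hB0 : 0 ≤ g ts := norm_nonneg _
  -- key claim : f sc ≤ μ + ε + S Mμ + g ts
  have hclaim : ∀ ε : ℝ, 0 < ε → f sc ≤ (μ + S * Mμ + g ts) + ε := by
    intro ε hε
    obtain ⟨φ₀, hφ₀O, hφ₀d⟩ : ∃ y ∈ O, dist (seg h x 0) y < μ + ε := by
      refine (infDist_lt_iff hOne).1 ?_
      have : infDist (seg h x 0) O = μ := hx0
      rw [this]; linarith
    obtain ⟨t₀, ht₀, hφ₀⟩ := hφ₀O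
    have hdist0 : dist (seg h x 0) (segF τ xs t₀) < μ + ε := by rw [hφ₀]; exact hφ₀d
    have hmemO : segF τ xs (t₀ + sc) ∈ O := hxsorb _ (by linarith [ht₀.1])
    have hle : f sc ≤ dist (seg h x sc) (segF τ xs (t₀ + sc)) := infDist_le_dist_of_mem hmemO
    refine le_trans hle ?_
    rw [dist_eq_norm]
    have hC0 : (0:ℝ) ≤ (μ + S * Mμ + g ts) + ε := by positivity
    rw [ContinuousMap.norm_le _ hC0]
    intro v
    rw [ContinuousMap.sub_apply]
    have hv1 : -τ ≤ v.1 := v.2.1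
    have hv2 : v.1 ≤ 0 := v.2.2
    by_cases hcase : sc + v.1 ≤ 0
    · have hw : sc + v.1 ∈ Icc (-τ) (0:ℝ) := ⟨by linarith, hcase⟩
      have hxeq : (seg h x sc) v = (seg h x 0) ⟨sc + v.1, hw⟩ := by
        show x (projIcc (-τ) S h (sc + v.1)) = x (projIcc (-τ) S h (0 + (sc + v.1)))
        rw [zero_add]
      have hxseq : (segF τ xs (t₀ + sc)) v = (segF τ xs t₀) ⟨sc + v.1, hw⟩ := by
        show xs (t₀ + sc + v.1) = xs (t₀ + (sc + v.1))
        rw [add_assoc]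
      have he : (seg h x sc) v - (segF τ xs (t₀ + sc)) v
          = (seg h x 0 - segF τ xs t₀) ⟨sc + v.1, hw⟩ := by
        rw [ContinuousMap.sub_apply, hxeq, hxseq]
      rw [he]
      refine le_trans (ContinuousMap.norm_coe_le_norm _ _) ?_
      rw [← dist_eq_norm]
      have hSM : 0 ≤ S * Mμ := by positivity
      linarith
    · push_neg at hcase
      set w : ℝ := sc + v.1 with hwdef
      have hw0 : 0 < w := hcase
      have hwsc : w ≤ sc := by rw [hwdef]; linarith
      have e1 : (seg h x sc) v = ev h x w := rfl
      have e2 : (segF τ xs (t₀ + sc)) v = xs (t₀ + w) := by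
        show xs (t₀ + sc + v.1) = xs (t₀ + w)
        rw [hwdef]; ring_nf
      rw [e1, e2]
      have t1 : ‖ev h x w - ev h x 0‖ ≤ g ts := htsmax ⟨hw0.le, hwsc⟩
      have t2 : ‖ev h x 0 - xs t₀‖ < μ + ε := by
        have h0mem : (0:ℝ) ∈ Icc (-τ) (0:ℝ) := ⟨by linarith, le_refl 0⟩
        have hxeq0 : ev h x 0 = (seg h x 0) ⟨0, h0mem⟩ := by
          show x (projIcc (-τ) S h 0) = x (projIcc (-τ) S h (0 + 0))
          rw [add_zero]
        have hxseq0 : xs t₀ = (segF τ xs t₀) ⟨0, h0mem⟩ := by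
          show xs t₀ = xs (t₀ + 0)
          rw [add_zero]
        have he0 : ev h x 0 - xs t₀ = (seg h x 0 - segF τ xs t₀) ⟨0, h0mem⟩ := by
          rw [ContinuousMap.sub_apply, hxeq0, hxseq0]
        rw [he0]
        calc ‖(seg h x 0 - segF τ xs t₀) ⟨0, h0mem⟩‖
            ≤ ‖seg h x 0 - segF τ xs t₀‖ := ContinuousMap.norm_coe_le_norm _ _
          _ = dist (seg h x 0) (segF τ xs t₀) := (dist_eq_norm _ _).symm
          _ < μ + ε := hdist0
      have t3 : ‖xs t₀ - xs (t₀ + w)‖ ≤ S * Mμ := by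
        rw [norm_sub_rev]
        calc ‖xs (t₀ + w) - xs t₀‖ ≤ w * Mμ := hxs_move t₀ w ht₀.1 hw0.le
          _ ≤ S * Mμ := mul_le_mul_of_nonneg_right (by linarith) hMμ.le
      have tri : ‖ev h x w - xs (t₀ + w)‖
          ≤ ‖ev h x w - ev h x 0‖ + ‖ev h x 0 - xs t₀‖ + ‖xs t₀ - xs (t₀ + w)‖ := by
        have hT := dist_triangle4 (ev h x w) (ev h x 0) (xs t₀) (xs (t₀ + w))
        simpa [dist_eq_norm] using hT
      linarith
  have hkey : f sc ≤ μ + S * Mμ + g ts := le_of_forall_pos_le_add hclaim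
  have hgts : μ / 2 ≤ g ts := by linarith
  -- now bound the rate from below
  rw [rate]
  refine le_iInf fun u => le_iInf fun hu => ?_
  obtain ⟨huL2, hueq⟩ := hu
  set I : ℝ := ∫ s in (0:ℝ)..S, ‖u s‖ ^ 2 with hIdef
  have hu2Int : IntegrableOn (fun s => ‖u s‖ ^ 2) (Icc 0 S) volume := by
    have h2 := huL2.integrable_norm_rpow (by norm_num) (by norm_num)
    have he : (fun s => ‖u s‖ ^ (2 : ℝ≥0∞).toReal) = fun s => ‖u s‖ ^ 2 := by
      funext s
      rw [ENNReal.toReal_ofNat]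
      rw [show ((2:ℝ)) = ((2:ℕ):ℝ) by norm_num, Real.rpow_natCast]
    rw [he] at h2
    exact h2
  have hu2ts : IntervalIntegrable (fun s => ‖u s‖ ^ 2) volume 0 ts := by
    rw [intervalIntegrable_iff_integrableOn_Ioc_of_le htsmem.1]
    exact hu2Int.mono_set (Ioc_subset_Icc_self.trans (Icc_subset_Icc_right htsS))
  have hu2S : IntervalIntegrable (fun s => ‖u s‖ ^ 2) volume 0 S := by
    rw [intervalIntegrable_iff_integrableOn_Ioc_of_le hS.le]
    exact hu2Int.mono_set Ioc_subset_Icc_self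
  have hI0 : 0 ≤ I := intervalIntegral.integral_nonneg hS.le fun s _ => sq_nonneg _
  have hmono : ∫ s in (0:ℝ)..ts, ‖u s‖ ^ 2 ≤ I := by
    refine intervalIntegral.integral_mono_interval (le_refl (0:ℝ)) htsmem.1 htsS ?_ hu2S
    exact Filter.Eventually.of_forall fun s => sq_nonneg _
  -- the control equation at time ts
  have heq := hueq ts ⟨htsmem.1, htsS⟩
  have hdrift : ‖∫ s in (0:ℝ)..ts, b (seg h x s)‖ ≤ μ / 4 := by
    have hbb : ∀ s ∈ uIoc (0:ℝ) ts, ‖b (seg h x s)‖ ≤ Mμ := by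
      intro s hs
      rw [uIoc_of_le htsmem.1] at hs
      exact (hb_x s ⟨hs.1.le, le_trans hs.2 htsmem.2⟩).1
    calc ‖∫ s in (0:ℝ)..ts, b (seg h x s)‖ ≤ Mμ * |ts - 0| :=
          intervalIntegral.norm_integral_le_of_norm_le_const hbb
      _ = Mμ * ts := by rw [sub_zero, abs_of_nonneg htsmem.1]
      _ ≤ Mμ * S := mul_le_mul_of_nonneg_left htsS hMμ.le
      _ ≤ μ / 4 := by linarith
  have hσu : μ / 4 ≤ ‖∫ s in (0:ℝ)..ts, matVec (σ' (seg h x s)) (u s)‖ := by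
    have h1 : ev h x ts - ev h x 0 = (∫ s in (0:ℝ)..ts, b (seg h x s)) +
        ∫ s in (0:ℝ)..ts, matVec (σ' (seg h x s)) (u s) := by
      rw [heq]; abel
    have h2 : g ts ≤ ‖∫ s in (0:ℝ)..ts, b (seg h x s)‖ +
        ‖∫ s in (0:ℝ)..ts, matVec (σ' (seg h x s)) (u s)‖ := by
      calc g ts = ‖ev h x ts - ev h x 0‖ := rfl
        _ = ‖(∫ s in (0:ℝ)..ts, b (seg h x s)) +
            ∫ s in (0:ℝ)..ts, matVec (σ' (seg h x s)) (u s)‖ := by rw [h1]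
        _ ≤ _ := norm_add_le _ _
    linarith
  -- the quadratic energy bound
  have hquad : μ ^ 2 / 16 ≤ Mμ * S * I := by
    by_contra hcon
    push_neg at hcon
    have hMs : 0 < Real.sqrt Mμ := Real.sqrt_pos.2 hMμ
    set c : ℝ := μ / (4 * Real.sqrt Mμ * S) with hcdef
    have hc0 : 0 < c := by positivity
    set F : ℝ → Vec d := fun s => matVec (σ' (seg h x s)) (u s) with hFdef
    by_cases hFint : IntervalIntegrable F volume 0 ts
    swap
    · rw [intervalIntegral.integral_undef hFint] at hσu
      rw [norm_zero] at hσu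
      linarith
    · have hpt : ∀ s ∈ Icc (0:ℝ) ts,
          ‖F s‖ ≤ Real.sqrt Mμ * c / 2 + Real.sqrt Mμ / (2 * c) * ‖u s‖ ^ 2 := by
        intro s hs
        have hsmem : s ∈ Icc (0:ℝ) sc := ⟨hs.1, le_trans hs.2 htsmem.2⟩
        have hfrob : frobNorm (σ' (seg h x s)) ≤ Real.sqrt Mμ :=
          Real.sqrt_le_sqrt (hb_x s hsmem).2
        have h1 : ‖F s‖ ≤ Real.sqrt Mμ * ‖u s‖ :=
          le_trans (norm_matVec_le _ _) (mul_le_mul_of_nonneg_right hfrob (norm_nonneg _))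
        have h2 : ‖u s‖ ≤ c / 2 + ‖u s‖ ^ 2 / (2 * c) := by
          rw [div_add_div _ _ (by norm_num) (by positivity), le_div_iff₀ (by positivity)]
          nlinarith [sq_nonneg (‖u s‖ - c)]
        calc ‖F s‖ ≤ Real.sqrt Mμ * (c / 2 + ‖u s‖ ^ 2 / (2 * c)) :=
              le_trans h1 (mul_le_mul_of_nonneg_left h2 hMs.le)
          _ = Real.sqrt Mμ * c / 2 + Real.sqrt Mμ / (2 * c) * ‖u s‖ ^ 2 := by
              field_simp
      have hRHSint : IntervalIntegrable
          (fun s => Real.sqrt Mμ * c / 2 + Real.sqrt Mμ / (2 * c) * ‖u s‖ ^ 2) volume 0 ts :=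
        intervalIntegrable_const.add (hu2ts.const_mul _)
      have hchain : μ / 4 ≤ Real.sqrt Mμ * c / 2 * ts +
          Real.sqrt Mμ / (2 * c) * ∫ s in (0:ℝ)..ts, ‖u s‖ ^ 2 := by
        calc μ / 4 ≤ ‖∫ s in (0:ℝ)..ts, F s‖ := hσu
          _ ≤ ∫ s in (0:ℝ)..ts, ‖F s‖ :=
              intervalIntegral.norm_integral_le_integral_norm htsmem.1
          _ ≤ ∫ s in (0:ℝ)..ts,
              (Real.sqrt Mμ * c / 2 + Real.sqrt Mμ / (2 * c) * ‖u s‖ ^ 2) :=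
              intervalIntegral.integral_mono_on htsmem.1 hFint.norm hRHSint hpt
          _ = Real.sqrt Mμ * c / 2 * ts +
              Real.sqrt Mμ / (2 * c) * ∫ s in (0:ℝ)..ts, ‖u s‖ ^ 2 := by
              rw [intervalIntegral.integral_add intervalIntegrable_const (hu2ts.const_mul _),
                intervalIntegral.integral_const, intervalIntegral.integral_const_mul]
              simp [sub_zero]
              ring
      have hterm1 : Real.sqrt Mμ * c / 2 * ts ≤ μ / 8 := by
        have e1 : Real.sqrt Mμ * c / 2 * S = μ / 8 := by
          rw [hcdef]
          field_simp
          ring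
        calc Real.sqrt Mμ * c / 2 * ts ≤ Real.sqrt Mμ * c / 2 * S := by
              apply mul_le_mul_of_nonneg_left htsS
              positivity
          _ = μ / 8 := e1
      have hterm2 : Real.sqrt Mμ / (2 * c) * ∫ s in (0:ℝ)..ts, ‖u s‖ ^ 2 < μ / 8 := by
        have h1 : Real.sqrt Mμ / (2 * c) * ∫ s in (0:ℝ)..ts, ‖u s‖ ^ 2
            ≤ Real.sqrt Mμ / (2 * c) * I :=
          mul_le_mul_of_nonneg_left hmono (by positivity)
        have h2 : Real.sqrt Mμ / (2 * c) * I < μ / 8 := by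
          rw [div_mul_eq_mul_div, div_lt_iff₀ (by positivity), hcdef]
          have hss : Real.sqrt Mμ * Real.sqrt Mμ = Mμ := Real.mul_self_sqrt hMμ.le
          rw [show μ / 8 * (2 * (μ / (4 * Real.sqrt Mμ * S)))
              = μ ^ 2 / (16 * Real.sqrt Mμ * S) by ring]
          rw [lt_div_iff₀ (by positivity)]
          calc Real.sqrt Mμ * I * (16 * Real.sqrt Mμ * S) = 16 * (Mμ * S * I) := by
                linear_combination (16 * S * I) * hss
            _ < μ ^ 2 := by linarith
        exact lt_of_le_of_lt h1 h2
      linarith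
  -- conclude
  apply ENNReal.ofReal_le_ofReal
  rw [div_le_iff₀ (by positivity)]
  nlinarith
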